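/- Let R be a commutative ring, D a subring of R with the same identity element 1, and I an ideal of the free R-algebra R⟨X⟩ = R⟨X₁,...,Xₙ⟩ generated by a subset G ⊆ D⟨X⟩ which is a monic Gröbner basis of I in R⟨X⟩ with respect to a monomial ordering ≺ on B_R. Then G is a Gröbner basis of the ideal I ∩ D⟨X⟩ in D⟨X⟩ with respect to the same monomial ordering ≺ on the standard D-basis B_D, hence I ∩ D⟨X⟩ = ⟨G⟩ holds in D⟨X⟩; moreover the set of normal words in B_D (mod G) coincides with the set of normal words in B_R (mod G). -/

import Mathlib

open scoped Classical

/-- Words in the alphabet `X₁,...,Xₙ`: the standard basis `B` of monomials of the free algebra. -/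
abbrev Word (n : ℕ) : Type := FreeMonoid (Fin n)

/-- The free `R`-algebra `R⟨X₁,...,Xₙ⟩`, realized as the monoid algebra on words. -/
abbrev FreeAlg (R : Type) [CommRing R] (n : ℕ) : Type := MonoidAlgebra R (Word n)

/-- `v` divides `u` as words: `u = w * v * s` for some words `w, s`. -/
def WordDvd {n : ℕ} (v u : Word n) : Prop := ∃ w s : Word n, u = w * v * s

/-- A monomial ordering on the words in `X₁,...,Xₙ`: a well-ordering `≺` such that
(M1) `u ≺ v` implies `w*u*s ≺ w*v*s`, and (M2) `w = u*v` implies `u ⪯ w` and `v ⪯ w`. -/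
structure MonomialOrdering (n : ℕ) where
  lt : Word n → Word n → Prop
  strictTotal : IsStrictTotalOrder (Word n) lt
  wellFounded : WellFounded lt
  mul_compat : ∀ w u v s : Word n, lt u v → lt (w * u * s) (w * v * s)
  factor_le : ∀ u v : Word n, ¬ lt (u * v) u ∧ ¬ lt (u * v) v

namespace MonomialOrdering

/-- `u ⪯ v` for a monomial ordering. -/
def le {n : ℕ} (o : MonomialOrdering n) (u v : Word n) : Prop := u = v ∨ o.lt u v

end MonomialOrdering

/-- The leading monomial `LM(f)` of `f`: the `≺`-greatest word occurring in `f`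
(with junk value `1` if `f = 0`). -/
noncomputable def LM {R : Type} [CommRing R] {n : ℕ} (o : MonomialOrdering n)
    (f : FreeAlg R n) : Word n :=
  if h : ∃ w, w ∈ f.coeff.support ∧ ∀ u ∈ f.coeff.support, o.le u w then h.choose else 1

/-- The leading coefficient `LC(f)` of `f`: the coefficient of `LM(f)` in `f`. -/
noncomputable def LC {R : Type} [CommRing R] {n : ℕ} (o : MonomialOrdering n)
    (f : FreeAlg R n) : R := f.coeff (LM o f)

/-- A subset `G` is monic if every `g ∈ G` is nonzero with leading coefficient `1`. -/
def IsMonicSet {R : Type} [CommRing R] {n : ℕ} (o : MonomialOrdering n)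
    (G : Set (FreeAlg R n)) : Prop := ∀ g ∈ G, g ≠ 0 ∧ LC o g = 1

/-- `G` is a monic Gröbner basis of the two-sided ideal `I`: a monic subset of `I` such that
the leading monomial of every nonzero `f ∈ I` is divisible by `LM(g)` for some `g ∈ G`. -/
def IsMonicGB {R : Type} [CommRing R] {n : ℕ} (o : MonomialOrdering n)
    (G : Set (FreeAlg R n)) (I : TwoSidedIdeal (FreeAlg R n)) : Prop :=
  (∀ g ∈ G, g ∈ I) ∧ IsMonicSet o G ∧
    ∀ f : FreeAlg R n, f ∈ I → f ≠ 0 → ∃ g ∈ G, WordDvd (LM o g) (LM o f)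

/-- The word `u` viewed as a monomial (with coefficient `1`) of the free algebra. -/
noncomputable def mono (R : Type) [CommRing R] {n : ℕ} (u : Word n) : FreeAlg R n :=
  MonoidAlgebra.single u 1

/-- `f` has a Gröbner representation `f = Σ_{i} λ_i u_i g_i v_i` with
`LM(u_i g_i v_i) ⪯ LM(f)` whenever `λ_i ≠ 0`. -/
def HasGroebnerRep {R : Type} [CommRing R] {n : ℕ} (o : MonomialOrdering n)
    (G : Set (FreeAlg R n)) (f : FreeAlg R n) : Prop :=
  ∃ (m : ℕ) (lam : Fin m → R) (u v : Fin m → Word n) (g : Fin m → FreeAlg R n),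
    (∀ i, g i ∈ G) ∧
    f = ∑ i, lam i • (mono R (u i) * g i * mono R (v i)) ∧
    ∀ i, lam i ≠ 0 → o.le (LM o (mono R (u i) * g i * mono R (v i))) (LM o f)

/-- The set `N(G)` of normal words (mod `G`): words divisible by no `LM(g)`, `g ∈ G`. -/
def NSet {R : Type} [CommRing R] {n : ℕ} (o : MonomialOrdering n)
    (G : Set (FreeAlg R n)) : Set (Word n) :=
  {u : Word n | ∀ g ∈ G, ¬ WordDvd (LM o g) u}

/-- `f` is a normal element (mod `G`): every word occurring in `f` is normal. -/
def IsNormal {R : Type} [CommRing R] {n : ℕ} (o : MonomialOrdering n)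
    (G : Set (FreeAlg R n)) (f : FreeAlg R n) : Prop :=
  ∀ u ∈ f.coeff.support, u ∈ NSet o G

/-- `G` is LM-reduced: `LM(g) ∤ LM(g')` for distinct `g, g' ∈ G`. -/
def LMReduced {R : Type} [CommRing R] {n : ℕ} (o : MonomialOrdering n)
    (G : Set (FreeAlg R n)) : Prop :=
  ∀ g ∈ G, ∀ g' ∈ G, g ≠ g' → ¬ WordDvd (LM o g) (LM o g')

/-- The canonical inclusion `S⟨X₁,...,Xₙ⟩ → T⟨X₁,...,Xₙ⟩` induced by the coefficient
algebra map `S → T`; it sends `Σ λ_u · u` to `Σ λ_u · u` (coefficients mapped along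
`algebraMap S T`). -/
noncomputable def coeffIncl (S : Type) [CommRing S] (T : Type) [CommRing T] [Algebra S T]
    (n : ℕ) : FreeAlg S n →ₐ[S] FreeAlg T n :=
  MonoidAlgebra.lift S (FreeAlg T n) (Word n) (MonoidAlgebra.of T (Word n))

section Aux

variable {R : Type} [CommRing R] {n : ℕ} (o : MonomialOrdering n)

lemma MonomialOrdering.le_antisymm' {u v : Word n} (h1 : o.le u v) (h2 : o.le v u) : u = v := by
  haveI := o.strictTotal
  rcases h1 with rfl | h1
  · rfl
  rcases h2 with rfl | h2
  · rfl
  exact absurd (_root_.trans h1 h2) (irrefl u)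

lemma MonomialOrdering.le_mul_compat {u v : Word n} (w s : Word n) (h : o.le u v) :
    o.le (w * u * s) (w * v * s) := by
  rcases h with rfl | h
  · exact Or.inl rfl
  · exact Or.inr (o.mul_compat w u v s h)

lemma exists_lm {f : FreeAlg R n} (hf : f ≠ 0) :
    ∃ w, w ∈ f.coeff.support ∧ ∀ u ∈ f.coeff.support, o.le u w := by
  haveI := o.strictTotal
  haveI : DecidableRel o.lt := Classical.decRel _
  letI : LinearOrder (Word n) := linearOrderOfSTO o.lt
  obtain ⟨b, hb, hmax⟩ := f.coeff.support.exists_max_image id (Finsupp.support_nonempty_iff.2 (by simpa using hf))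
  exact ⟨b, hb, fun u hu => hmax u hu⟩

lemma LM_spec {f : FreeAlg R n} (hf : f ≠ 0) :
    LM o f ∈ f.coeff.support ∧ ∀ u ∈ f.coeff.support, o.le u (LM o f) := by
  rw [LM, dif_pos (exists_lm o hf)]
  exact (exists_lm o hf).choose_spec

lemma LM_mem {f : FreeAlg R n} (hf : f ≠ 0) : LM o f ∈ f.coeff.support := (LM_spec o hf).1

lemma LM_le {f : FreeAlg R n} {u : Word n} (hu : u ∈ f.coeff.support) : o.le u (LM o f) := by
  have hf : f ≠ 0 := fun h => by simp [h] at hu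
  exact (LM_spec o hf).2 u hu

lemma LM_eq {f : FreeAlg R n} {w : Word n} (hw : w ∈ f.coeff.support)
    (hmax : ∀ u ∈ f.coeff.support, o.le u w) : LM o f = w := by
  have hf : f ≠ 0 := fun h => by simp [h] at hw
  exact o.le_antisymm' (hmax _ (LM_mem o hf)) ((LM_spec o hf).2 w hw)

lemma LM_zero : LM o (0 : FreeAlg R n) = 1 := by
  rw [LM, dif_neg]
  rintro ⟨w, hw, -⟩
  simp at hw

variable (D : Subring R)

lemma coeffIncl_single (a : Word n) (b : ↥D) :
    coeffIncl ↥D R n (MonoidAlgebra.single a b) = MonoidAlgebra.single a (algebraMap ↥D R b) := by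
  rw [coeffIncl, MonoidAlgebra.lift_single]
  show b • MonoidAlgebra.single a (1 : R) = _
  rw [MonoidAlgebra.smul_single, Algebra.smul_def, mul_one]

lemma coeffIncl_apply (f : FreeAlg ↥D n) (u : Word n) :
    (coeffIncl ↥D R n f).coeff u = algebraMap ↥D R (f.coeff u) := by
  induction f using MonoidAlgebra.induction_linear with
  | zero => simp
  | add f g hf hg => rw [map_add, MonoidAlgebra.coeff_add, Finsupp.add_apply, hf, hg, MonoidAlgebra.coeff_add, Finsupp.add_apply, map_add]
  | single a b =>
      rw [coeffIncl_single]
      simp [Finsupp.single_apply, apply_ite (algebraMap ↥D R)]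

lemma algebraMap_subring_injective : Function.Injective (algebraMap ↥D R) :=
  fun a b h => Subtype.ext h

lemma support_coeffIncl (f : FreeAlg ↥D n) : (coeffIncl ↥D R n f).coeff.support = f.coeff.support := by
  ext u
  simp only [Finsupp.mem_support_iff, coeffIncl_apply]
  rw [not_iff_not]
  constructor
  · intro h
    exact algebraMap_subring_injective D (by simpa using h)
  · intro h; rw [h, map_zero]

lemma coeffIncl_ne_zero {f : FreeAlg ↥D n} (hf : f ≠ 0) : coeffIncl ↥D R n f ≠ 0 := by
  intro h
  apply hf
  rw [← MonoidAlgebra.coeff_eq_zero, ← Finsupp.support_eq_empty, ← support_coeffIncl D f, h,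
    MonoidAlgebra.coeff_zero, Finsupp.support_zero]

lemma LM_coeffIncl (f : FreeAlg ↥D n) : LM o (coeffIncl ↥D R n f) = LM o f := by
  rcases eq_or_ne f 0 with rfl | hf
  · rw [map_zero, LM_zero, LM_zero]
  · refine LM_eq o ?_ ?_
    · rw [support_coeffIncl]; exact LM_mem o hf
    · intro u hu
      rw [support_coeffIncl] at hu
      exact LM_le o hu

lemma LC_coeffIncl (f : FreeAlg ↥D n) :
    LC o (coeffIncl ↥D R n f) = algebraMap ↥D R (LC o f) := by
  rw [LC, LC, LM_coeffIncl, coeffIncl_apply]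

lemma coeffIncl_mono (u : Word n) : coeffIncl ↥D R n (mono ↥D u) = mono R u := by
  rw [mono, coeffIncl_single, map_one, mono]

lemma mono_mul_mono (w s : Word n) (f : FreeAlg R n) :
    mono R w * f * mono R s = MonoidAlgebra.mapDomain (fun u => w * u * s) f := by
  induction f using MonoidAlgebra.induction_linear with
  | zero => simp
  | add f g hf hg =>
      rw [mul_add, add_mul, hf, hg, MonoidAlgebra.mapDomain_add]
  | single a b =>
      show MonoidAlgebra.single w 1 * MonoidAlgebra.single a b * MonoidAlgebra.single s 1 = _
      rw [MonoidAlgebra.single_mul_single, MonoidAlgebra.single_mul_single, one_mul, mul_one,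
        MonoidAlgebra.mapDomain_single]

lemma conj_inj (w s : Word n) : Function.Injective (fun u : Word n => w * u * s) :=
  fun a b h => mul_left_cancel (mul_right_cancel h)

lemma conj_apply (w s : Word n) (f : FreeAlg R n) (u : Word n) :
    (mono R w * f * mono R s).coeff (w * u * s) = f.coeff u := by
  rw [mono_mul_mono]
  exact Finsupp.mapDomain_apply (conj_inj w s) _ _

lemma conj_support {w s : Word n} {f : FreeAlg R n} {u : Word n}
    (hu : u ∈ (mono R w * f * mono R s).coeff.support) : ∃ v ∈ f.coeff.support, u = w * v * s := by
  rw [mono_mul_mono] at hu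
  have := Finsupp.mapDomain_support (f := fun u => w * u * s) (s := f.coeff) hu
  rcases Finset.mem_image.1 this with ⟨v, hv, hvu⟩
  exact ⟨v, hv, hvu.symm⟩

lemma LM_conj {f : FreeAlg R n} (hf : f ≠ 0) (w s : Word n) :
    LM o (mono R w * f * mono R s) = w * LM o f * s := by
  refine LM_eq o ?_ ?_
  · rw [Finsupp.mem_support_iff, conj_apply]
    exact Finsupp.mem_support_iff.1 (LM_mem o hf)
  · intro u hu
    obtain ⟨v, hv, rfl⟩ := conj_support hu
    exact o.le_mul_compat w s (LM_le o hv)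

lemma mem_span_conj_smul {G : Set (FreeAlg ↥D n)} {g : FreeAlg ↥D n} (hg : g ∈ G)
    (c : ↥D) (a b : Word n) :
    c • (mono ↥D a * g * mono ↥D b) ∈ TwoSidedIdeal.span G := by
  rw [Algebra.smul_def]
  refine TwoSidedIdeal.mul_mem_left _ _ _ ?_
  refine TwoSidedIdeal.mul_mem_right _ _ _ ?_
  exact TwoSidedIdeal.mul_mem_left _ _ _ (TwoSidedIdeal.subset_span hg)

/-- Key lemma: every element of `D⟨X⟩` mapping into `I` lies in the span of `G`. -/
lemma mem_span_of_mem_comap {G : Set (FreeAlg ↥D n)} {I : TwoSidedIdeal (FreeAlg R n)}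
    (hGB : IsMonicGB o (⇑(coeffIncl ↥D R n) '' G) I) :
    ∀ f : FreeAlg ↥D n, coeffIncl ↥D R n f ∈ I → f ∈ TwoSidedIdeal.span G := by
  haveI := o.strictTotal
  have key : ∀ w : Word n, ∀ f : FreeAlg ↥D n, LM o f = w →
      coeffIncl ↥D R n f ∈ I → f ∈ TwoSidedIdeal.span G := by
    intro w
    induction w using o.wellFounded.induction with
    | _ w ih =>
      intro f hLM hfI
      rcases eq_or_ne f 0 with rfl | hf
      · exact TwoSidedIdeal.zero_mem _
      -- get a Gröbner divisor
      obtain ⟨g', hg'G, hdvd⟩ := hGB.2.2 _ hfI (coeffIncl_ne_zero D hf)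
      obtain ⟨g, hgG, rfl⟩ := hg'G
      rw [LM_coeffIncl, LM_coeffIncl] at hdvd
      obtain ⟨a, b, hab⟩ := hdvd
      -- g is nonzero with leading coefficient 1
      have hmonic := hGB.2.1 _ ⟨g, hgG, rfl⟩
      have hg0 : g ≠ 0 := by
        rintro rfl
        exact hmonic.1 (map_zero _)
      have hLCg : LC o g = 1 := by
        apply algebraMap_subring_injective D
        rw [← LC_coeffIncl, hmonic.2, map_one]
      set t : FreeAlg ↥D n := mono ↥D a * g * mono ↥D b with ht
      set c : ↥D := LC o f with hc
      have hLMt : LM o t = LM o f := by rw [ht, LM_conj o hg0, ← hab]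
      have htLM : t.coeff (LM o f) = 1 := by
        rw [hab, ht, conj_apply]
        exact hLCg
      set f' : FreeAlg ↥D n := f - c • t with hf'
      -- ι t ∈ I and hence ι f' ∈ I
      have htI : coeffIncl ↥D R n t ∈ I := by
        rw [ht, map_mul, map_mul, coeffIncl_mono, coeffIncl_mono]
        refine TwoSidedIdeal.mul_mem_right _ _ _ ?_
        exact TwoSidedIdeal.mul_mem_left _ _ _ (hGB.1 _ ⟨g, hgG, rfl⟩)
      have hf'I : coeffIncl ↥D R n f' ∈ I := by
        rw [hf', map_sub, map_smul]
        refine TwoSidedIdeal.sub_mem _ hfI ?_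
        rw [Algebra.smul_def]
        exact TwoSidedIdeal.mul_mem_left _ _ _ htI
      -- the leading terms cancel
      have hcoeff : f'.coeff (LM o f) = 0 := by
        rw [hf', MonoidAlgebra.coeff_sub, Finsupp.sub_apply, MonoidAlgebra.coeff_smul, Finsupp.smul_apply, htLM, smul_eq_mul, mul_one, hc, LC,
          sub_self]
      have hsmallsup : ∀ u ∈ f'.coeff.support, o.lt u (LM o f) := by
        intro u hu
        have hne : u ≠ LM o f := by
          intro h; rw [h] at hu; exact Finsupp.mem_support_iff.1 hu hcoeff
        have hle : o.le u (LM o f) := by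
          have : u ∈ f.coeff.support ∨ u ∈ (c • t).coeff.support := by
            by_contra hcon
            push_neg at hcon
            have h1 : f.coeff u = 0 := Finsupp.notMem_support_iff.1 hcon.1
            have h2 : (c • t).coeff u = 0 := Finsupp.notMem_support_iff.1 hcon.2
            apply Finsupp.mem_support_iff.1 hu
            rw [hf', MonoidAlgebra.coeff_sub, Finsupp.sub_apply, h1, h2, sub_zero]
          rcases this with h | h
          · exact LM_le o h
          · have h' : u ∈ t.coeff.support := Finsupp.support_smul (g := t.coeff) h
            rw [← hLMt]
            exact LM_le o h'
        exact hle.resolve_left hne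
      rcases eq_or_ne f' 0 with hf'0 | hf'ne
      · have : f = c • t := by
          have := sub_eq_zero.1 hf'0
          exact this
        rw [this, ht]
        exact mem_span_conj_smul D hgG c a b
      · have hlt : o.lt (LM o f') w := by
          rw [← hLM]
          exact hsmallsup _ (LM_mem o hf'ne)
        have hmem : f' ∈ TwoSidedIdeal.span G := ih _ hlt f' rfl hf'I
        have : f = f' + c • t := by rw [hf']; abel
        rw [this]
        exact TwoSidedIdeal.add_mem _ hmem (ht ▸ mem_span_conj_smul D hgG c a b)
  exact fun f => key (LM o f) f rfl

end Aux

/-- **Theorem 5.2 (i).**  Let `R` be a commutative ring, `D` a subring of `R` with the same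
identity, and `I` the ideal of `R⟨X₁,...,Xₙ⟩` generated by a subset `G ⊆ D⟨X⟩` which is a
monic Gröbner basis of `I` in `R⟨X⟩`.  Then `G` is a (monic) Gröbner basis for the ideal
`I ∩ D⟨X⟩` of `D⟨X⟩` with respect to the same monomial ordering, hence
`I ∩ D⟨X⟩ = ⟨G⟩` holds in `D⟨X⟩`; moreover the set of normal words in `B_D` (mod `G`)
coincides with the set of normal words in `B_R` (mod `G`). -/
theorem groebner_descends_to_subring {R : Type} [CommRing R] {n : ℕ}
    (o : MonomialOrdering n) (D : Subring R) (G : Set (FreeAlg ↥D n))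
    (I : TwoSidedIdeal (FreeAlg R n))
    (hgen : I = TwoSidedIdeal.span (⇑(coeffIncl ↥D R n) '' G))
    (hGB : IsMonicGB o (⇑(coeffIncl ↥D R n) '' G) I) :
    IsMonicGB o G (TwoSidedIdeal.comap (coeffIncl ↥D R n).toRingHom I) ∧
    TwoSidedIdeal.comap (coeffIncl ↥D R n).toRingHom I = TwoSidedIdeal.span G ∧
    NSet o G = NSet o (⇑(coeffIncl ↥D R n) '' G) := by
  set ι := coeffIncl ↥D R n with hι
  have hcomap : ∀ f : FreeAlg ↥D n,
      f ∈ TwoSidedIdeal.comap ι.toRingHom I ↔ ι f ∈ I := fun f => Iff.rfl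
  have hmonic : ∀ g ∈ G, g ≠ 0 ∧ LC o g = 1 := by
    intro g hg
    have h := hGB.2.1 _ ⟨g, hg, rfl⟩
    constructor
    · rintro rfl; exact h.1 (map_zero _)
    · apply algebraMap_subring_injective D
      rw [← LC_coeffIncl, h.2, map_one]
  refine ⟨⟨?_, hmonic, ?_⟩, ?_, ?_⟩
  · intro g hg
    exact (hcomap g).2 (hGB.1 _ ⟨g, hg, rfl⟩)
  · intro f hf hne
    obtain ⟨g', hg'G, hdvd⟩ := hGB.2.2 _ ((hcomap f).1 hf) (coeffIncl_ne_zero D hne)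
    obtain ⟨g, hgG, rfl⟩ := hg'G
    rw [LM_coeffIncl, LM_coeffIncl] at hdvd
    exact ⟨g, hgG, hdvd⟩
  · apply le_antisymm
    · intro f hf
      exact mem_span_of_mem_comap o D hGB f ((hcomap f).1 hf)
    · intro f hf
      refine TwoSidedIdeal.mem_span_iff.1 hf _ ?_
      intro g hg
      exact (hcomap g).2 (hGB.1 _ ⟨g, hg, rfl⟩)
  · ext u
    simp only [NSet, Set.mem_setOf_eq]
    constructor
    · rintro h g' ⟨g, hgG, rfl⟩
      rw [LM_coeffIncl]
      exact h g hgG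
    · intro h g hgG
      have := h _ ⟨g, hgG, rfl⟩
      rwa [LM_coeffIncl] at this
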